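/- Let n qubits sit on the vertices of a graph G = (V,E), with ergodic single-qubit dissipators D_i, two-qubit correlators F_e, a probability distribution {p_e} on E, and the multivariate channel E_{ε⃗}(ρ) = ∑_{e=(i,j)∈E} p_e ( (1−ε_e)/2 · (D_i(ρ) + D_j(ρ)) + ε_e · F_e(ρ) ) with unique steady state ρ∞(ε⃗) for every ε⃗ ∈ [0,1)^{|E|}. Then each matrix entry of ρ∞(ε⃗) in the computational basis, as a function of the real variables ε⃗ = (ε_e)_{e∈E}, is analytic on an open set of ℝ^{|E|} containing the cube [0,1)^{|E|}. -/

import Mathlib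

namespace SSP

noncomputable section

open Matrix
open scoped ComplexOrder

/-- Computational basis labels for `n` qubits. -/
abbrev Idx (n : ℕ) := Fin n → Fin 2

/-- Operators (matrices) on the Hilbert space of `n` qubits. -/
abbrev Op (n : ℕ) := Matrix (Idx n) (Idx n) ℂ

/-- Super-operators on `n` qubits. -/
abbrev SOp (n : ℕ) := Op n →ₗ[ℂ] Op n

/-- The operator norm (largest singular value) of a complex matrix. -/
noncomputable def opNorm {m : Type*} [Fintype m] [DecidableEq m]
    (M : Matrix m m ℂ) : ℝ :=
  ‖Matrix.toEuclideanCLM (𝕜 := ℂ) M‖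

/-- A density matrix: positive semidefinite with unit trace. -/
def IsDensity {n : ℕ} (ρ : Op n) : Prop := ρ.PosSemidef ∧ ρ.trace = 1

/-- An operator is supported on the set `S` of qubits if it has the form
`Ô_S ⊗ 1` on the remaining qubits. -/
def SupportedOn {n : ℕ} (S : Set (Fin n)) (M : Op n) : Prop :=
  (∀ x y : Idx n, (∃ i ∉ S, x i ≠ y i) → M x y = 0) ∧
  (∀ x y x' y' : Idx n,
      (∀ i ∈ S, x i = x' i) → (∀ i ∈ S, y i = y' i) →
      (∀ i ∉ S, x i = y i) → (∀ i ∉ S, x' i = y' i) → M x y = M x' y')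

/-- The support of an operator: the smallest set of qubits supporting it
(the intersection of all supporting sets). -/
def suppOp {n : ℕ} (M : Op n) : Set (Fin n) :=
  {i | ∀ S : Set (Fin n), SupportedOn S M → i ∈ S}

/-- `E` is a quantum channel (CPTP map) acting only on the qubits in `S`:
it has a Kraus representation whose Kraus operators are all supported on `S`. -/
def IsChannelOn {n : ℕ} (S : Set (Fin n)) (E : SOp n) : Prop :=
  ∃ (m : ℕ) (F : Fin m → Op n),
    (∀ j, SupportedOn S (F j)) ∧
    (∑ j, (F j)ᴴ * F j = 1) ∧
    (∀ ρ, E ρ = ∑ j, F j * ρ * (F j)ᴴ)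

/-- A quantum channel on the whole system. -/
def IsChannel {n : ℕ} (E : SOp n) : Prop := IsChannelOn Set.univ E

/-- `Estar` is the adjoint of `E` with respect to the Hilbert–Schmidt
inner product `⟨A,B⟩ = Tr(A†B)`. -/
def IsHSAdjoint {n : ℕ} (E Estar : SOp n) : Prop :=
  ∀ A B : Op n, ((Estar A)ᴴ * B).trace = (Aᴴ * (E B)).trace

/-- An ergodic channel: it has a unique fixed point among density matrices,
this fixed point is full rank (positive definite), and there is no other
eigenvalue of modulus one. -/
def IsErgodic {n : ℕ} (E : SOp n) : Prop :=
  (∃ σ : Op n, IsDensity σ ∧ σ.PosDef ∧ E σ = σ ∧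
      ∀ ρ : Op n, IsDensity ρ → E ρ = ρ → ρ = σ) ∧
  (∀ μ : ℂ, Module.End.HasEigenvalue (E : Module.End ℂ (Op n)) μ → μ = 1 ∨ ‖μ‖ < 1)

/-- The set of qubits (endpoints) of an edge. -/
def edgeQubits {n : ℕ} (e : Sym2 (Fin n)) : Set (Fin n) := {i | i ∈ e}

/-- Finset of endpoints of an edge. -/
def edgeFinset' {n : ℕ} (e : Sym2 (Fin n)) : Finset (Fin n) :=
  Finset.univ.filter (· ∈ e)

/-- A Hamiltonian is geometrically `k`-local w.r.t. the graph `G`: it is a sum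
of Hermitian terms, each supported on a connected subset of `G` with at most
`k` vertices. -/
def GeomLocal {n : ℕ} (G : SimpleGraph (Fin n)) (k : ℕ) (H : Op n) : Prop :=
  ∃ (m : ℕ) (h : Fin m → Op n) (S : Fin m → Set (Fin n)),
    H = ∑ j, h j ∧
    ∀ j, (h j).IsHermitian ∧ SupportedOn (S j) (h j) ∧
      (S j).ncard ≤ k ∧ (G.induce (S j)).Preconnected

/-- The ball of radius `k` around a set of vertices, in the graph metric. -/
def Ball {n : ℕ} (G : SimpleGraph (Fin n)) (X : Set (Fin n)) (k : ℕ) :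
    Set (Fin n) :=
  {v | ∃ u ∈ X, ∃ w : G.Walk u v, w.length ≤ k}

/- Pauli matrices and the Wauli bases. -/
def PX : Matrix (Fin 2) (Fin 2) ℂ := !![0, 1; 1, 0]
def PY : Matrix (Fin 2) (Fin 2) ℂ := !![0, -Complex.I; Complex.I, 0]
def PZ : Matrix (Fin 2) (Fin 2) ℂ := !![1, 0; 0, -1]

/-- `W = (1/2)(1 + λ Z)`. -/
noncomputable def Wmat (l : ℝ) : Matrix (Fin 2) (Fin 2) ℂ :=
  (2⁻¹ : ℂ) • (1 + (l : ℂ) • PZ)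

/-- Single-qubit Wauli basis `{W, X/2, Y/2, Z/2}`. -/
noncomputable def wauli (l : ℝ) : Fin 4 → Matrix (Fin 2) (Fin 2) ℂ :=
  ![Wmat l, (2⁻¹ : ℂ) • PX, (2⁻¹ : ℂ) • PY, (2⁻¹ : ℂ) • PZ]

/-- Single-qubit dual Wauli basis `{1, X, Y, Z - λ·1}`. -/
noncomputable def dualWauli (l : ℝ) : Fin 4 → Matrix (Fin 2) (Fin 2) ℂ :=
  ![1, PX, PY, PZ - (l : ℂ) • 1]

/-- The `n`-qubit Wauli basis element `Q_α` (tensor product of the `Q_{α_i}`). -/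
noncomputable def Qmat {n : ℕ} (lam : Fin n → ℝ) (α : Fin n → Fin 4) : Op n :=
  Matrix.of fun x y => ∏ i, wauli (lam i) (α i) (x i) (y i)

/-- The `n`-qubit dual Wauli basis element `Q̃_α`. -/
noncomputable def Qdual {n : ℕ} (lam : Fin n → ℝ) (α : Fin n → Fin 4) : Op n :=
  Matrix.of fun x y => ∏ i, dualWauli (lam i) (α i) (x i) (y i)

/-- The support of a Wauli string. -/
def suppStr {n : ℕ} (α : Fin n → Fin 4) : Finset (Fin n) :=
  Finset.univ.filter (fun i => α i ≠ 0)

/-- The coefficient `c_α = Tr(Q_α O)` of the expansion `O = ∑_α c_α Q̃_α`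
in the dual Wauli basis. -/
noncomputable def QCoeff {n : ℕ} (lam : Fin n → ℝ) (O : Op n)
    (α : Fin n → Fin 4) : ℂ :=
  (Qmat lam α * O).trace

/-- The `Q1` norm: the `ℓ¹` norm of the dual-Wauli coefficient vector. -/
noncomputable def Q1Norm {n : ℕ} (lam : Fin n → ℝ) (O : Op n) : ℝ :=
  ∑ α : Fin n → Fin 4, ‖QCoeff lam O α‖

/-- The subspace `S_k`: the span of the dual Wauli operators `Q̃_α` with
`|α| ≤ k`. -/
def Sk {n : ℕ} (lam : Fin n → ℝ) (k : ℕ) : Submodule ℂ (Op n) :=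
  Submodule.span ℂ {Q | ∃ α : Fin n → Fin 4, (suppStr α).card ≤ k ∧ Q = Qdual lam α}

/-- The trace norm `Tr √(O†O)` of a matrix. -/
noncomputable def traceNorm {m : Type*} [Fintype m] [DecidableEq m]
    (M : Matrix m m ℂ) : ℝ :=
  (((Matrix.posSemidef_conjTranspose_mul_self M).1.eigenvectorUnitary : Matrix m m ℂ) *
      Matrix.diagonal (((↑) : ℝ → ℂ) ∘ Real.sqrt ∘ (Matrix.posSemidef_conjTranspose_mul_self M).1.eigenvalues) *
      (star (Matrix.posSemidef_conjTranspose_mul_self M).1.eigenvectorUnitary : Matrix m m ℂ)).trace.re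


set_option linter.unusedSectionVars false

section MatrixHelpers
variable {m : Type*} [Fintype m] [DecidableEq m]


lemma psd_trace_nonneg {A : Matrix m m ℂ} (hA : A.PosSemidef) : 0 ≤ A.trace := by
  exact hA.trace_nonneg

omit [DecidableEq m] in
lemma frob_eq_zero {B : Matrix m m ℂ} (h : (Bᴴ * B).trace = 0) : B = 0 := by
  have hd : ∀ j, (Bᴴ * B) j j = ((∑ i, Complex.normSq (B i j) : ℝ) : ℂ) := by
    intro j
    simp [Matrix.mul_apply, Matrix.conjTranspose_apply, Complex.normSq_eq_conj_mul_self]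
  rw [Matrix.trace] at h
  simp only [Matrix.diag, hd] at h
  rw [← Complex.ofReal_sum] at h
  have h2 : (∑ j, ∑ i, Complex.normSq (B i j)) = 0 := by exact_mod_cast h
  have h3 : ∀ j ∈ Finset.univ, ∀ i ∈ (Finset.univ : Finset m), Complex.normSq (B i j) = 0 := by
    intro j hj
    have hj' := (Finset.sum_eq_zero_iff_of_nonneg (fun j _ => Finset.sum_nonneg
      (fun i _ => Complex.normSq_nonneg _))).mp h2 j hj
    exact fun i hi => (Finset.sum_eq_zero_iff_of_nonneg
      (fun i _ => Complex.normSq_nonneg _)).mp hj' i hi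
  ext i j
  simpa using Complex.normSq_eq_zero.mp (h3 j (Finset.mem_univ j) i (Finset.mem_univ i))

open scoped MatrixOrder in
lemma psd_sqrt_facts {A : Matrix m m ℂ} (hA : A.PosSemidef) :
    ∃ S : Matrix m m ℂ, Sᴴ = S ∧ S * S = A := by
  obtain ⟨X, hX, -, hXX⟩ := CFC.exists_sqrt_of_isSelfAdjoint_of_quasispectrumRestricts
    hA.isHermitian (QuasispectrumRestricts.nnreal_of_nonneg hA.nonneg)
  exact ⟨X, hX.star_eq, hXX⟩

lemma psd_trace_eq_zero {A : Matrix m m ℂ} (hA : A.PosSemidef) (h : A.trace = 0) : A = 0 := by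
  obtain ⟨S, hSH, hSS⟩ := psd_sqrt_facts hA
  have h1 : (Sᴴ * S).trace = 0 := by rw [hSH, hSS, h]
  have h2 := frob_eq_zero h1
  rw [← hSS, h2, mul_zero]

lemma psd_trace_mul_nonneg {A B : Matrix m m ℂ} (hA : A.PosSemidef) (hB : B.PosSemidef) :
    0 ≤ (A * B).trace := by
  obtain ⟨S, hSH, hSS⟩ := psd_sqrt_facts hA
  have h1 : (A * B).trace = (S * B * Sᴴ).trace := by
    rw [hSH, ← hSS, Matrix.mul_assoc, Matrix.trace_mul_comm]
  rw [h1]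
  exact psd_trace_nonneg (hB.mul_mul_conjTranspose_same _)

lemma psd_mul_trace_eq_zero {A B : Matrix m m ℂ} (hA : A.PosSemidef) (hB : B.PosSemidef)
    (h : (A * B).trace = 0) : A * B = 0 := by
  obtain ⟨S, hSH, hSS⟩ := psd_sqrt_facts hA
  obtain ⟨T, hTH, hTT⟩ := psd_sqrt_facts hB
  have h1 : ((S * T)ᴴ * (S * T)).trace = (A * B).trace := by
    rw [Matrix.conjTranspose_mul, hSH, hTH]
    calc (T * S * (S * T)).trace
        = (T * (S * S) * T).trace := by rw [Matrix.mul_assoc, Matrix.mul_assoc, Matrix.mul_assoc]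
      _ = ((S * S) * (T * T)).trace := by
          rw [Matrix.trace_mul_cycle, Matrix.trace_mul_comm]
      _ = (A * B).trace := by rw [hSS, hTT]
  have h2 : S * T = 0 := frob_eq_zero (by rw [h1, h])
  have h3 : A * B = S * (S * T) * T := by
    rw [← hSS, ← hTT]; noncomm_ring
  rw [h3, h2, Matrix.mul_zero, Matrix.zero_mul]


lemma exists_posneg_parts {H : Matrix m m ℂ} (hH : H.IsHermitian) :
    ∃ P N Pi : Matrix m m ℂ, P.PosSemidef ∧ N.PosSemidef ∧ Pi.PosSemidef ∧
      (1 - Pi).PosSemidef ∧ H = P - N ∧ H * Pi = P ∧ P * N = 0 := by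
  set W : Matrix m m ℂ := (hH.eigenvectorUnitary : Matrix m m ℂ) with hWdef
  have hU := hH.eigenvectorUnitary.2
  have hW1 : Wᴴ * W = 1 := by
    rw [← Matrix.star_eq_conjTranspose]; exact hU.1
  have hW2 : W * Wᴴ = 1 := by
    rw [← Matrix.star_eq_conjTranspose]; exact hU.2
  set μ := hH.eigenvalues with hmu
  have hdeq : ∀ (f g : m → ℂ), (∀ i, f i = g i) →
      W * diagonal f * Wᴴ = W * diagonal g * Wᴴ := by
    intro f g h
    have : f = g := funext h
    rw [this]
  have hmul : ∀ a b : m → ℂ,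
      (W * diagonal a * Wᴴ) * (W * diagonal b * Wᴴ) = W * diagonal (fun i => a i * b i) * Wᴴ := by
    intro a b
    calc (W * diagonal a * Wᴴ) * (W * diagonal b * Wᴴ)
        = W * diagonal a * (Wᴴ * W) * diagonal b * Wᴴ := by
          simp only [Matrix.mul_assoc]
      _ = W * diagonal (fun i => a i * b i) * Wᴴ := by
          rw [hW1, Matrix.mul_one, Matrix.mul_assoc W, Matrix.diagonal_mul_diagonal]
  have hsub : ∀ a b : m → ℂ,
      (W * diagonal a * Wᴴ) - (W * diagonal b * Wᴴ) = W * diagonal (fun i => a i - b i) * Wᴴ := by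
    intro a b
    rw [← Matrix.sub_mul, ← Matrix.mul_sub, Matrix.diagonal_sub]
  have hpsd : ∀ c : m → ℝ, (∀ i, 0 ≤ c i) →
      (W * diagonal (fun i => (c i : ℂ)) * Wᴴ).PosSemidef := by
    intro c hc
    exact (Matrix.posSemidef_diagonal_iff.mpr fun i => by
      simpa using Complex.zero_le_real.mpr (hc i)).mul_mul_conjTranspose_same W
  have hspec : H = W * diagonal (fun i => ((μ i : ℝ) : ℂ)) * Wᴴ := by
    have := hH.spectral_theorem
    rw [Unitary.conjStarAlgAut_apply, Matrix.star_eq_conjTranspose] at this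
    exact this
  have h1 : (1 : Matrix m m ℂ) = W * diagonal (fun _ : m => (1:ℂ)) * Wᴴ := by
    rw [Matrix.diagonal_one, Matrix.mul_one, hW2]
  refine ⟨W * diagonal (fun i => ((max (μ i) 0 : ℝ) : ℂ)) * Wᴴ,
    W * diagonal (fun i => ((max (-μ i) 0 : ℝ) : ℂ)) * Wᴴ,
    W * diagonal (fun i => (((if 0 < μ i then (1:ℝ) else 0) : ℝ) : ℂ)) * Wᴴ,
    hpsd _ (fun i => le_max_right _ _), hpsd _ (fun i => le_max_right _ _),
    hpsd _ (fun i => by split <;> norm_num), ?_, ?_, ?_, ?_⟩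
  · rw [h1, hsub]
    rw [hdeq _ (fun i => (((if 0 < μ i then (0:ℝ) else 1) : ℝ) : ℂ))
      (fun i => by by_cases h : 0 < μ i <;> simp [h])]
    exact hpsd _ (fun i => by split <;> norm_num)
  · rw [hspec, hsub]
    apply hdeq
    intro i
    rw [← Complex.ofReal_sub]
    congr 1
    rcases le_or_gt (μ i) 0 with h | h
    · rw [max_eq_right h, max_eq_left (neg_nonneg.mpr h)]; ring
    · rw [max_eq_left h.le, max_eq_right (neg_nonpos.mpr h.le)]; ring
  · rw [hspec, hmul]
    apply hdeq
    intro i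
    rcases le_or_gt (μ i) 0 with h | h
    · simp [not_lt.mpr h, max_eq_right h]
    · simp [h, max_eq_left h.le]
  · rw [hmul]
    rw [hdeq _ (fun _ => (0:ℂ)) (fun i => by
      rcases le_or_gt (μ i) 0 with h | h
      · simp [max_eq_right h]
      · simp [max_eq_right (neg_nonpos.mpr h.le)])]
    simp


lemma psd_csmul {A : Matrix m m ℂ} {c : ℝ} (hc : 0 ≤ c) (hA : A.PosSemidef) :
    ((c : ℂ) • A).PosSemidef := by
  exact hA.smul (Complex.zero_le_real.mpr hc)

lemma psd_sum {ι : Type*} (s : Finset ι) (f : ι → Matrix m m ℂ)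
    (h : ∀ i ∈ s, (f i).PosSemidef) : (∑ i ∈ s, f i).PosSemidef := by
  classical
  induction s using Finset.induction_on with
  | empty => simpa using Matrix.PosSemidef.zero
  | insert _ _ hni ih =>
    rename_i a s'
    rw [Finset.sum_insert hni]
    exact (h a (Finset.mem_insert_self a s')).add
      (ih (fun i hi => h i (Finset.mem_insert_of_mem hi)))

lemma rsmul_eq (r : ℝ) (A : Matrix m m ℂ) : r • A = (r : ℂ) • A := by
  ext i j
  simp [Complex.real_smul]

end MatrixHelpers

lemma channel_trace {n : ℕ} {S : Set (Fin n)} {Eop : SOp n} (h : IsChannelOn S Eop)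
    (ρ : Op n) : (Eop ρ).trace = ρ.trace := by
  obtain ⟨m, F, -, hsum, hrep⟩ := h
  rw [hrep]
  rw [Matrix.trace_sum]
  have : ∀ j, (F j * ρ * (F j)ᴴ).trace = ((F j)ᴴ * F j * ρ).trace := by
    intro j
    rw [Matrix.trace_mul_cycle]
  simp_rw [this]
  rw [← Matrix.trace_sum, ← Finset.sum_mul, hsum, Matrix.one_mul]

lemma channel_psd {n : ℕ} {S : Set (Fin n)} {Eop : SOp n} (h : IsChannelOn S Eop)
    {ρ : Op n} (hρ : ρ.PosSemidef) : (Eop ρ).PosSemidef := by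
  obtain ⟨m, F, -, -, hrep⟩ := h
  rw [hrep]
  exact psd_sum _ _ (fun j _ => hρ.mul_mul_conjTranspose_same (F j))

lemma channel_conjT {n : ℕ} {S : Set (Fin n)} {Eop : SOp n} (h : IsChannelOn S Eop)
    (ρ : Op n) : Eop ρᴴ = (Eop ρ)ᴴ := by
  obtain ⟨m, F, -, -, hrep⟩ := h
  rw [hrep, hrep, Matrix.conjTranspose_sum]
  congr 1
  funext j
  rw [Matrix.conjTranspose_mul, Matrix.conjTranspose_mul, Matrix.conjTranspose_conjTranspose,
    Matrix.mul_assoc]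


lemma fixed_unique_herm {n : ℕ} (T : SOp n)
    (hTr : ∀ ρ : Op n, (T ρ).trace = ρ.trace)
    (hPos : ∀ ρ : Op n, ρ.PosSemidef → (T ρ).PosSemidef)
    (σ : Op n)
    (huniq : ∀ ρ : Op n, IsDensity ρ → T ρ = ρ → ρ = σ)
    {H : Op n} (hHerm : H.IsHermitian) (hfix : T H = H) (htr : H.trace = 0) : H = 0 := by
  obtain ⟨P, N, Pi, hP, hN, hPi, hPi', hHPN, hHPi, hPN⟩ := exists_posneg_parts hHerm
  by_cases hP0 : P = 0
  · have hHN : H = -N := by rw [hHPN, hP0, zero_sub]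
    have hNtr : N.trace = 0 := by
      have h2 := htr
      rw [hHN, Matrix.trace_neg, neg_eq_zero] at h2
      exact h2
    rw [hHN, psd_trace_eq_zero hN hNtr, neg_zero]
  by_cases hN0 : N = 0
  · have hHP : H = P := by rw [hHPN, hN0, sub_zero]
    rw [hHP] at htr ⊢
    exact psd_trace_eq_zero hP htr
  exfalso
  have htrPN : P.trace = N.trace := by
    have h2 : H.trace = P.trace - N.trace := by rw [hHPN, Matrix.trace_sub]
    rw [htr] at h2
    linear_combination -h2
  have hQ : (T P).PosSemidef := hPos P hP
  have hTN : (T N).PosSemidef := hPos N hN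
  have hQTN : T N = T P - H := by
    have h2 : T P - T N = H := by rw [← map_sub, ← hHPN, hfix]
    rw [← h2]
    abel
  have hTrQ : (T P).trace = P.trace := hTr P
  have ha : 0 ≤ ((T N) * Pi).trace := psd_trace_mul_nonneg hTN hPi
  have hb : 0 ≤ ((T P) * (1 - Pi)).trace := psd_trace_mul_nonneg hQ hPi'
  have hsplit : (T P).trace = ((T P) * Pi).trace + ((T P) * (1 - Pi)).trace := by
    rw [← Matrix.trace_add, ← Matrix.mul_add]
    simp
  have hQPi : (T P) * Pi = P + (T N) * Pi := by
    have h2 : (T P) * Pi = (H + T N) * Pi := by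
      rw [hQTN]
      congr 1
      abel
    rw [h2, Matrix.add_mul, hHPi]
  have hab : ((T N) * Pi).trace + ((T P) * (1 - Pi)).trace = 0 := by
    have h2 := hsplit
    rw [hQPi, Matrix.trace_add, hTrQ] at h2
    linear_combination -h2
  have ha0 : ((T N) * Pi).trace = 0 := by
    have h1 : ((T N) * Pi).trace ≤ 0 := by
      have h2 : ((T N) * Pi).trace = -((T P) * (1 - Pi)).trace := by linear_combination hab
      rw [h2]
      exact neg_nonpos_of_nonneg hb
    exact le_antisymm h1 ha
  have hb0 : ((T P) * (1 - Pi)).trace = 0 := by linear_combination hab - ha0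
  have hTNPi : (T N) * Pi = 0 := psd_mul_trace_eq_zero hTN hPi ha0
  have hQ1Pi : (T P) * (1 - Pi) = 0 := psd_mul_trace_eq_zero hQ hPi' hb0
  have hTPP : T P = P := by
    have h1 : T P = (T P) * Pi := by
      have h2 := hQ1Pi
      rw [Matrix.mul_sub, Matrix.mul_one, sub_eq_zero] at h2
      exact h2
    rw [h1, hQPi, hTNPi, add_zero]
  have hTNN : T N = N := by
    rw [hQTN, hTPP, hHPN]
    abel
  -- normalize P
  have hPtr0 : P.trace ≠ 0 := fun h => hP0 (psd_trace_eq_zero hP h)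
  have hPtrpos : 0 ≤ P.trace := psd_trace_nonneg hP
  obtain ⟨hre, him⟩ := Complex.le_def.mp hPtrpos
  have hPr : P.trace = ((P.trace.re : ℝ) : ℂ) := by
    apply Complex.ext <;> simp [← him]
  have hrne : P.trace.re ≠ 0 := by
    intro h
    apply hPtr0
    rw [hPr, h, Complex.ofReal_zero]
  set r := P.trace.re with hrdef
  have hrnonneg : 0 ≤ r := by simpa using hre
  have hρ1 : IsDensity (((r⁻¹ : ℝ) : ℂ) • P) := by
    refine ⟨psd_csmul (inv_nonneg.mpr hrnonneg) hP, ?_⟩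
    rw [Matrix.trace_smul, smul_eq_mul, hPr, ← Complex.ofReal_mul, inv_mul_cancel₀ hrne,
      Complex.ofReal_one]
  have hρ1fix : T (((r⁻¹ : ℝ) : ℂ) • P) = ((r⁻¹ : ℝ) : ℂ) • P := by
    rw [_root_.map_smul, hTPP]
  have hρ1σ := huniq _ hρ1 hρ1fix
  have hPσ : P = ((r : ℝ) : ℂ) • σ := by
    rw [← hρ1σ, smul_smul, ← Complex.ofReal_mul, mul_inv_cancel₀ hrne, Complex.ofReal_one,
      one_smul]
  -- normalize N
  have hNtr0 : N.trace ≠ 0 := fun h => hN0 (psd_trace_eq_zero hN h)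
  have hNr : N.trace = P.trace := htrPN.symm
  have hρ2 : IsDensity (((r⁻¹ : ℝ) : ℂ) • N) := by
    refine ⟨psd_csmul (inv_nonneg.mpr hrnonneg) hN, ?_⟩
    rw [Matrix.trace_smul, smul_eq_mul, hNr, hPr, ← Complex.ofReal_mul, inv_mul_cancel₀ hrne,
      Complex.ofReal_one]
  have hρ2fix : T (((r⁻¹ : ℝ) : ℂ) • N) = ((r⁻¹ : ℝ) : ℂ) • N := by
    rw [_root_.map_smul, hTNN]
  have hρ2σ := huniq _ hρ2 hρ2fix
  have hNσ : N = ((r : ℝ) : ℂ) • σ := by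
    rw [← hρ2σ, smul_smul, ← Complex.ofReal_mul, mul_inv_cancel₀ hrne, Complex.ofReal_one,
      one_smul]
  -- contradiction
  have hσσ : σ * σ = 0 := by
    have h2 : P * N = (((r : ℝ) : ℂ) * ((r : ℝ) : ℂ)) • (σ * σ) := by
      rw [hPσ, hNσ, Matrix.smul_mul, Matrix.mul_smul, smul_smul]
    rw [hPN] at h2
    have hc : (((r : ℝ) : ℂ) * ((r : ℝ) : ℂ)) ≠ 0 := by
      simp [hrne]
    rcases smul_eq_zero.mp h2.symm with h | h
    · exact absurd h hc
    · exact h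
  have hσpsd : σ.PosSemidef := hρ1σ ▸ hρ1.1
  have hσ0 : σ = 0 := by
    apply frob_eq_zero
    rw [hσpsd.isHermitian.eq, hσσ, Matrix.trace_zero]
  have : (1 : ℂ) = 0 := by
    have h2 := hρ1.2
    rw [hρ1σ, hσ0, Matrix.trace_zero] at h2
    exact h2.symm
  exact one_ne_zero this

lemma fixed_unique {n : ℕ} (T : SOp n)
    (hTr : ∀ ρ : Op n, (T ρ).trace = ρ.trace)
    (hPos : ∀ ρ : Op n, ρ.PosSemidef → (T ρ).PosSemidef)
    (hStar : ∀ ρ : Op n, T ρᴴ = (T ρ)ᴴ)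
    (σ : Op n)
    (huniq : ∀ ρ : Op n, IsDensity ρ → T ρ = ρ → ρ = σ)
    {X : Op n} (hX : T X = X) (hXtr : X.trace = 0) : X = 0 := by
  have h1 : (X + Xᴴ).IsHermitian := by
    rw [Matrix.IsHermitian, Matrix.conjTranspose_add, Matrix.conjTranspose_conjTranspose]
    abel
  have h2 : ((Complex.I : ℂ) • (X - Xᴴ)).IsHermitian := by
    rw [Matrix.IsHermitian, Matrix.conjTranspose_smul, Matrix.conjTranspose_sub,
      Matrix.conjTranspose_conjTranspose]
    simp only [Complex.star_def, Complex.conj_I]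
    rw [neg_smul, smul_sub, smul_sub, neg_sub]
  have hXH : T Xᴴ = Xᴴ := by rw [hStar, hX]
  have hf1 : T (X + Xᴴ) = X + Xᴴ := by rw [map_add, hX, hXH]
  have hf2 : T ((Complex.I : ℂ) • (X - Xᴴ)) = (Complex.I : ℂ) • (X - Xᴴ) := by
    rw [_root_.map_smul, map_sub, hX, hXH]
  have ht1 : (X + Xᴴ).trace = 0 := by
    rw [Matrix.trace_add, Matrix.trace_conjTranspose, hXtr]
    simp
  have ht2 : ((Complex.I : ℂ) • (X - Xᴴ)).trace = 0 := by
    rw [Matrix.trace_smul, Matrix.trace_sub, Matrix.trace_conjTranspose, hXtr]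
    simp
  have hz1 := fixed_unique_herm T hTr hPos σ huniq h1 hf1 ht1
  have hz2 := fixed_unique_herm T hTr hPos σ huniq h2 hf2 ht2
  have hz3 : X - Xᴴ = 0 := by
    have := congrArg (fun M => (-Complex.I : ℂ) • M) hz2
    simpa [smul_smul, Complex.I_mul_I] using this
  have hsum : (X + Xᴴ) + (X - Xᴴ) = (2:ℂ) • X := by
    rw [two_smul]
    abel
  have h20 : (2 : ℂ) • X = 0 := by rw [← hsum, hz1, hz3, add_zero]
  rcases smul_eq_zero.mp h20 with h | h
  · exact absurd h two_ne_zero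
  · exact h

lemma edgeFinset'_card {n : ℕ} {G : SimpleGraph (Fin n)} {e : Sym2 (Fin n)}
    (he : e ∈ G.edgeSet) : (edgeFinset' e).card = 2 := by
  induction e with
  | _ a b =>
    rw [SimpleGraph.mem_edgeSet] at he
    have hab : a ≠ b := he.ne
    have h2 : edgeFinset' s(a, b) = {a, b} := by
      ext x
      simp [edgeFinset', Sym2.mem_iff]
    rw [h2, Finset.card_pair hab]

/-- The vectorization of an operator. -/
def vecOf {n : ℕ} (M : Op n) : Idx n × Idx n → ℂ := fun pq => M pq.1 pq.2

/-- The matrix of a superoperator in the standard basis. -/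
def toMat {n : ℕ} (L : SOp n) : Matrix (Idx n × Idx n) (Idx n × Idx n) ℂ :=
  Matrix.of fun pq rs => (L (Matrix.single rs.1 rs.2 1)) pq.1 pq.2

lemma toMat_mulVec {n : ℕ} (L : SOp n) (M : Op n) :
    toMat L *ᵥ vecOf M = vecOf (L M) := by
  funext pq
  have hLM : L M = ∑ i : Idx n, ∑ j : Idx n, M i j • L (Matrix.single i j 1) := by
    conv_lhs => rw [Matrix.matrix_eq_sum_single M]
    rw [map_sum]
    apply Finset.sum_congr rfl
    intro i _
    rw [map_sum]
    apply Finset.sum_congr rfl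
    intro j _
    have h1 : Matrix.single i j (M i j) = M i j • Matrix.single i j 1 := by
      rw [Matrix.smul_single, smul_eq_mul, mul_one]
    rw [h1, _root_.map_smul]
  have hR : vecOf (L M) pq
      = ∑ rs : Idx n × Idx n, M rs.1 rs.2 * (L (Matrix.single rs.1 rs.2 1)) pq.1 pq.2 := by
    rw [vecOf, hLM, Fintype.sum_prod_type]
    rw [Matrix.sum_apply]
    apply Finset.sum_congr rfl
    intro i _
    rw [Matrix.sum_apply]
    apply Finset.sum_congr rfl
    intro j _
    simp
  rw [hR]
  rw [Matrix.mulVec, dotProduct]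
  apply Finset.sum_congr rfl
  intro rs _
  rw [toMat, vecOf]
  simp [mul_comm]

section Analytic

variable {V : Type*} [NormedAddCommGroup V] [NormedSpace ℝ V]

lemma analyticOnNhd_det {ι : Type*} [Fintype ι] [DecidableEq ι]
    {M : V → Matrix ι ι ℂ} {s : Set V}
    (h : ∀ i j, AnalyticOnNhd ℝ (fun t => M t i j) s) :
    AnalyticOnNhd ℝ (fun t => (M t).det) s := by
  have hdet : (fun t => (M t).det)
      = fun t => ∑ σ : Equiv.Perm ι, ((Equiv.Perm.sign σ : ℤ) : ℂ) * ∏ i, M t (σ i) i := by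
    funext t
    rw [Matrix.det_apply']
  rw [hdet]
  apply Finset.analyticOnNhd_fun_sum
  intro σ _
  apply analyticOnNhd_const.mul
  intro z hz
  exact Finset.analyticAt_fun_prod _ (fun i _ => h (σ i) i z hz)

end Analytic

/-- the matrix entries of the multivariate steady state
`ρ∞(ε⃗)` extend to functions analytic on an open subset of `ℝ^{|E|}`
containing the cube `[0,1)^{|E|}`. -/
theorem steady_state_entries_analytic {n : ℕ}
    (G : SimpleGraph (Fin n)) [DecidableRel G.Adj]
    (p : Sym2 (Fin n) → ℝ) (hp0 : ∀ e, 0 ≤ p e)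
    (hpsupp : ∀ e ∉ G.edgeSet, p e = 0)
    (hpsum : ∑ e ∈ G.edgeFinset, p e = 1)
    (hq : ∀ i : Fin n, 0 < ∑ e ∈ G.edgeFinset.filter (fun e => i ∈ e), p e)
    (D : Fin n → SOp n)
    (hDch : ∀ i, IsChannelOn {i} (D i)) (hDerg : ∀ i, IsErgodic (D i))
    (F : Sym2 (Fin n) → SOp n)
    (hF : ∀ e ∈ G.edgeSet, IsChannelOn (edgeQubits e) (F e))
    (E : (Sym2 (Fin n) → ℝ) → SOp n)
    (hE : ∀ eps (ρ : Op n), E eps ρ = ∑ e ∈ G.edgeFinset,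
        p e • (((1 - eps e) / 2) • (∑ i ∈ edgeFinset' e, D i ρ)
          + eps e • F e ρ))
    (ρinf : (Sym2 (Fin n) → ℝ) → Op n)
    (hsteady : ∀ eps : Sym2 (Fin n) → ℝ,
      (∀ e ∈ G.edgeSet, 0 ≤ eps e ∧ eps e < 1) →
      IsDensity (ρinf eps) ∧ E eps (ρinf eps) = ρinf eps ∧
        ∀ ρ : Op n, IsDensity ρ → E eps ρ = ρ → ρ = ρinf eps) :
    ∃ (U : Set (Sym2 (Fin n) → ℝ)) (g : (Sym2 (Fin n) → ℝ) → Op n),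
      IsOpen U ∧
      {eps : Sym2 (Fin n) → ℝ | ∀ e ∈ G.edgeSet, 0 ≤ eps e ∧ eps e < 1} ⊆ U ∧
      (∀ eps, (∀ e ∈ G.edgeSet, 0 ≤ eps e ∧ eps e < 1) → g eps = ρinf eps) ∧
      (∀ x y : Idx n, AnalyticOnNhd ℝ (fun eps => g eps x y) U) := by
  classical
  -- the normalized identity matrix
  have hcard : ((Fintype.card (Idx n) : ℕ) : ℂ) = (2 : ℂ) ^ n := by
    rw [Fintype.card_fun]
    push_cast
    simp
  have h2n : ((2 : ℂ) ^ n) ≠ 0 := pow_ne_zero _ two_ne_zero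
  set Cmat : Op n := ((2 : ℂ) ^ n)⁻¹ • (1 : Op n) with hCdef
  have hCtr : Cmat.trace = 1 := by
    rw [hCdef, Matrix.trace_smul, Matrix.trace_one, smul_eq_mul, hcard,
      inv_mul_cancel₀ h2n]
  -- trace preservation (for every eps)
  have hTP : ∀ eps (ρ : Op n), (E eps ρ).trace = ρ.trace := by
    intro eps ρ
    rw [hE, Matrix.trace_sum]
    have hterm : ∀ e ∈ G.edgeFinset,
        (p e • (((1 - eps e) / 2) • (∑ i ∈ edgeFinset' e, D i ρ)
          + eps e • F e ρ)).trace = ((p e : ℝ) : ℂ) * ρ.trace := by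
      intro e he
      have heE : e ∈ G.edgeSet := SimpleGraph.mem_edgeFinset.mp he
      rw [Matrix.trace_smul, Matrix.trace_add, Matrix.trace_smul, Matrix.trace_smul,
        Matrix.trace_sum]
      have h1 : ∀ i ∈ edgeFinset' e, (D i ρ).trace = ρ.trace :=
        fun i _ => channel_trace (hDch i) ρ
      rw [Finset.sum_congr rfl h1, Finset.sum_const, edgeFinset'_card heE,
        channel_trace (hF e heE) ρ]
      simp only [smul_eq_mul, nsmul_eq_mul, Complex.real_smul]
      push_cast
      ring
    rw [Finset.sum_congr rfl hterm, ← Finset.sum_mul, ← Complex.ofReal_sum, hpsum,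
      Complex.ofReal_one, one_mul]
  -- compatibility with conjugate transpose (for every eps)
  have hStar : ∀ eps (ρ : Op n), E eps ρᴴ = (E eps ρ)ᴴ := by
    intro eps ρ
    rw [hE, hE, Matrix.conjTranspose_sum]
    apply Finset.sum_congr rfl
    intro e he
    have heE : e ∈ G.edgeSet := SimpleGraph.mem_edgeFinset.mp he
    have h1 : ∀ i ∈ edgeFinset' e, D i ρᴴ = (D i ρ)ᴴ :=
      fun i _ => channel_conjT (hDch i) ρ
    rw [Finset.sum_congr rfl h1, channel_conjT (hF e heE) ρ]
    simp [Matrix.conjTranspose_smul, Matrix.conjTranspose_add, Matrix.conjTranspose_sum]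
  -- positivity on the cube
  have hPos : ∀ eps, (∀ e ∈ G.edgeSet, 0 ≤ eps e ∧ eps e < 1) →
      ∀ ρ : Op n, ρ.PosSemidef → (E eps ρ).PosSemidef := by
    intro eps hcube ρ hρ
    rw [hE]
    apply psd_sum
    intro e he
    have heE : e ∈ G.edgeSet := SimpleGraph.mem_edgeFinset.mp he
    obtain ⟨he0, he1⟩ := hcube e heE
    rw [rsmul_eq]
    apply psd_csmul (hp0 e)
    have hA : (((1 - eps e) / 2) • (∑ i ∈ edgeFinset' e, D i ρ)).PosSemidef := by
      rw [rsmul_eq]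
      exact psd_csmul (by linarith) (psd_sum _ _ (fun i _ => channel_psd (hDch i) hρ))
    have hB : (eps e • F e ρ).PosSemidef := by
      rw [rsmul_eq]
      exact psd_csmul he0 (channel_psd (hF e heE) hρ)
    exact hA.add hB
  -- the affine map L eps
  set tproj : SOp n := (Matrix.traceLinearMap (Idx n) ℂ ℂ).smulRight Cmat with htprojdef
  set Lmap : (Sym2 (Fin n) → ℝ) → SOp n :=
    fun eps => (LinearMap.id : SOp n) - E eps + tproj with hLdef
  have hLapp : ∀ eps (M : Op n), Lmap eps M = M - E eps M + M.trace • Cmat := by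
    intro eps M
    rw [hLdef]
    simp [htprojdef]
  -- injectivity of L eps on the cube
  have hLinj : ∀ eps, (∀ e ∈ G.edgeSet, 0 ≤ eps e ∧ eps e < 1) →
      ∀ M : Op n, Lmap eps M = 0 → M = 0 := by
    intro eps hcube M hM0
    rw [hLapp] at hM0
    have htrM : M.trace = 0 := by
      have h1 := congrArg Matrix.trace hM0
      rw [Matrix.trace_add, Matrix.trace_sub, Matrix.trace_smul, hTP, hCtr,
        Matrix.trace_zero, smul_eq_mul, mul_one] at h1
      linear_combination h1
    have hfix : E eps M = M := by
      rw [htrM, zero_smul, add_zero, sub_eq_zero] at hM0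
      exact hM0.symm
    exact fixed_unique (E eps) (hTP eps) (hPos eps hcube) (hStar eps) (ρinf eps)
      (hsteady eps hcube).2.2 hfix htrM
  -- the matrix of L eps
  set A : (Sym2 (Fin n) → ℝ) → Matrix (Idx n × Idx n) (Idx n × Idx n) ℂ :=
    fun eps => toMat (Lmap eps) with hAdef
  -- analyticity of the entries
  have hcoord : ∀ e : Sym2 (Fin n), AnalyticOnNhd ℝ
      (fun eps : Sym2 (Fin n) → ℝ => ((eps e : ℝ) : ℂ)) Set.univ := by
    intro e
    exact (Complex.ofRealCLM.comp
      (ContinuousLinearMap.proj (R := ℝ) (φ := fun _ : Sym2 (Fin n) => ℝ) e)).analyticOnNhd _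
  have hEentry : ∀ (x y : Idx n) (M0 : Op n), AnalyticOnNhd ℝ
      (fun eps => (E eps M0) x y) Set.univ := by
    intro x y M0
    have hfun : (fun eps => (E eps M0) x y) = fun eps : Sym2 (Fin n) → ℝ =>
        ∑ e ∈ G.edgeFinset, ((p e : ℝ) : ℂ) *
          ((1 - ((eps e : ℝ) : ℂ)) * (2⁻¹ : ℂ) * ((∑ i ∈ edgeFinset' e, D i M0) x y)
            + ((eps e : ℝ) : ℂ) * ((F e M0) x y)) := by
      funext eps
      rw [hE, Matrix.sum_apply]
      apply Finset.sum_congr rfl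
      intro e he
      simp only [Matrix.smul_apply, Matrix.add_apply, Complex.real_smul]
      push_cast
      ring
    rw [hfun]
    apply Finset.analyticOnNhd_fun_sum
    intro e _
    exact analyticOnNhd_const.mul
      ((((analyticOnNhd_const.sub (hcoord e)).mul analyticOnNhd_const).mul
        analyticOnNhd_const).add ((hcoord e).mul analyticOnNhd_const))
  have hent : ∀ pq rs, AnalyticOnNhd ℝ (fun eps => A eps pq rs) Set.univ := by
    intro pq rs
    have hfun : (fun eps => A eps pq rs) = fun eps =>
        (Matrix.single rs.1 rs.2 (1:ℂ)) pq.1 pq.2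
          - (E eps (Matrix.single rs.1 rs.2 1)) pq.1 pq.2
          + (Matrix.single rs.1 rs.2 (1:ℂ)).trace * Cmat pq.1 pq.2 := by
      funext eps
      rw [hAdef]
      show (Lmap eps (Matrix.single rs.1 rs.2 1)) pq.1 pq.2 = _
      rw [hLapp]
      simp [Matrix.sub_apply, Matrix.add_apply, Matrix.smul_apply, smul_eq_mul]
    rw [hfun]
    exact (analyticOnNhd_const.sub (hEentry pq.1 pq.2 _)).add analyticOnNhd_const
  have hdet : AnalyticOnNhd ℝ (fun eps => (A eps).det) Set.univ := analyticOnNhd_det hent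
  have hdetcont : Continuous (fun eps => (A eps).det) := by
    rw [← continuousOn_univ]
    exact hdet.continuousOn
  -- the open set
  set U : Set (Sym2 (Fin n) → ℝ) := {eps | (A eps).det ≠ 0} with hUdef
  have hUopen : IsOpen U := by
    have : U = (fun eps => (A eps).det) ⁻¹' {(0:ℂ)}ᶜ := rfl
    rw [this]
    exact isOpen_compl_singleton.preimage hdetcont
  -- the cube is contained in U
  have hcubeU : ∀ eps, (∀ e ∈ G.edgeSet, 0 ≤ eps e ∧ eps e < 1) → (A eps).det ≠ 0 := by
    intro eps hcube hdet0
    obtain ⟨v, hv0, hv⟩ := Matrix.exists_mulVec_eq_zero_iff.mpr hdet0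
    set M : Op n := Matrix.of (fun x y : Idx n => v (x, y)) with hMdef
    have hvec : vecOf M = v := by
      funext pq
      show M pq.1 pq.2 = v pq
      rw [hMdef]
      show v (pq.1, pq.2) = v pq
      rw [Prod.mk.eta]
    have hLM : Lmap eps M = 0 := by
      have h1 : vecOf (Lmap eps M) = 0 := by
        rw [← toMat_mulVec, hvec]
        exact hv
      ext x y
      have := congrFun h1 (x, y)
      exact this
    have hM0 : M = 0 := hLinj eps hcube M hLM
    apply hv0
    rw [← hvec, hM0]
    funext pq
    rfl
  -- the candidate function
  set g : (Sym2 (Fin n) → ℝ) → Op n := fun eps =>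
    Matrix.of (fun x y : Idx n =>
      ((A eps).det)⁻¹ * (((A eps).adjugate) *ᵥ (vecOf Cmat)) (x, y)) with hgdef
  refine ⟨U, g, hUopen, ?_, ?_, ?_⟩
  · intro eps heps
    exact hcubeU eps heps
  · -- g = ρinf on the cube
    intro eps hcube
    obtain ⟨hdens, hfix, -⟩ := hsteady eps hcube
    have hLρ : Lmap eps (ρinf eps) = Cmat := by
      rw [hLapp, hfix, sub_self, zero_add, hdens.2, one_smul]
    have hvec : A eps *ᵥ vecOf (ρinf eps) = vecOf Cmat := by
      rw [hAdef]
      show toMat (Lmap eps) *ᵥ vecOf (ρinf eps) = vecOf Cmat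
      rw [toMat_mulVec, hLρ]
    have hadj : ((A eps).adjugate) *ᵥ (vecOf Cmat) = (A eps).det • vecOf (ρinf eps) := by
      rw [← hvec, Matrix.mulVec_mulVec, Matrix.adjugate_mul, Matrix.smul_mulVec,
        Matrix.one_mulVec]
    have hd := hcubeU eps hcube
    ext x y
    show ((A eps).det)⁻¹ * (((A eps).adjugate) *ᵥ (vecOf Cmat)) (x, y) = ρinf eps x y
    rw [hadj]
    show ((A eps).det)⁻¹ * ((A eps).det * vecOf (ρinf eps) (x, y)) = ρinf eps x y
    rw [← mul_assoc, inv_mul_cancel₀ hd, one_mul]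
    rfl
  · -- analyticity of the entries of g on U
    intro x y
    have hadjent : ∀ rs, AnalyticOnNhd ℝ (fun eps => (A eps).adjugate (x, y) rs) Set.univ := by
      intro rs
      have hfun : (fun eps => (A eps).adjugate (x, y) rs)
          = fun eps => ((A eps).updateRow rs (Pi.single (x, y) 1)).det := by
        funext eps
        rw [Matrix.adjugate_apply]
      rw [hfun]
      apply analyticOnNhd_det
      intro a b
      by_cases hab : a = rs
      · have : (fun eps => ((A eps).updateRow rs (Pi.single (x, y) 1)) a b)
            = fun _ : Sym2 (Fin n) → ℝ => (Pi.single (x, y) (1:ℂ) : Idx n × Idx n → ℂ) b := by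
          funext eps
          rw [Matrix.updateRow_apply, if_pos hab]
        rw [this]
        exact analyticOnNhd_const
      · have : (fun eps => ((A eps).updateRow rs (Pi.single (x, y) 1)) a b)
            = fun eps => A eps a b := by
          funext eps
          rw [Matrix.updateRow_apply, if_neg hab]
        rw [this]
        exact hent a b
    have hfun : (fun eps => g eps x y) = fun eps =>
        ((A eps).det)⁻¹ * ∑ rs : Idx n × Idx n, (A eps).adjugate (x, y) rs * vecOf Cmat rs := by
      funext eps
      show ((A eps).det)⁻¹ * (((A eps).adjugate) *ᵥ (vecOf Cmat)) (x, y) = _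
      rw [Matrix.mulVec, dotProduct]
    rw [hfun]
    have hinv : AnalyticOnNhd ℝ (fun eps => ((A eps).det)⁻¹) U := by
      exact (hdet.mono (Set.subset_univ U)).inv (fun z hz => hz)
    apply hinv.mul
    apply AnalyticOnNhd.mono _ (Set.subset_univ U)
    apply Finset.analyticOnNhd_fun_sum
    intro rs _
    exact (hadjent rs).mul analyticOnNhd_const


end

end SSP
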